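/- Fix an integer h ≥ 2 and a function f: ℕ → ℕ with f(n) → ∞ and f(n) = o(n^{h−1}) as n → ∞. Then the family of all A ⊆ ℕ such that limsup_{n→∞} r_{A,h}(n)/f(n) = ∞ is comeager in the Cantor space 𝒫(ℕ). -/

import Mathlib

open Filter Topology Set
open scoped ENNReal

/-- Number of unordered representations of `x` as a sum of `h` elements of `A`
(repetitions allowed): multisets of size `h` with elements in `A` summing to `x`. -/
noncomputable def repCount {X : Type*} [AddCommMonoid X] (A : Set X) (h : ℕ) (x : X) : ℕ :=
  Nat.card {s : Multiset X // Multiset.card s = h ∧ (∀ a ∈ s, a ∈ A) ∧ s.sum = x}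

/-- `A` is a `B_h[g]` set: every `x` has at most `g` unordered representations. -/
def IsBhg {X : Type*} [AddCommMonoid X] (A : Set X) (h g : ℕ) : Prop :=
  ∀ x, repCount A h x ≤ g

/-- `A ⊆ ℕ` is a Sidon set. -/
def IsSidonSet (A : Set ℕ) : Prop :=
  ∀ a b c d, a ∈ A → b ∈ A → c ∈ A → d ∈ A → a ≤ b → c ≤ d → a + b = c + d → a = c ∧ b = d

/-- Lower asymptotic density. -/
noncomputable def lowerDensity (S : Set ℕ) : ℝ :=
  Filter.liminf (fun n => ((S ∩ Set.Ico 0 n).ncard : ℝ) / n) Filter.atTop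

/-- Upper asymptotic density. -/
noncomputable def upperDensity (S : Set ℕ) : ℝ :=
  Filter.limsup (fun n => ((S ∩ Set.Ico 0 n).ncard : ℝ) / n) Filter.atTop

lemma repFinite (A : Set ℕ) (h n : ℕ) :
    Finite {s : Multiset ℕ // Multiset.card s = h ∧ (∀ a ∈ s, a ∈ A) ∧ s.sum = n} := by
  haveI : Finite {s : Multiset (Fin (n+1)) // Multiset.card s = h} :=
    (inferInstance : Finite (Sym (Fin (n+1)) h))
  refine Finite.of_injective (fun s : {s : Multiset ℕ // Multiset.card s = h ∧ (∀ a ∈ s, a ∈ A) ∧ s.sum = n} =>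
    (⟨(s : Multiset ℕ).map (fun a => (⟨min a n, by omega⟩ : Fin (n+1))), by
      simp [s.2.1]⟩ : Sym (Fin (n+1)) h)) ?_
  intro s t hst
  have hmaps : (s : Multiset ℕ).map (fun a => (⟨min a n, by omega⟩ : Fin (n+1)))
      = (t : Multiset ℕ).map (fun a => (⟨min a n, by omega⟩ : Fin (n+1))) :=
    congrArg Subtype.val hst
  have key : ∀ u : {s : Multiset ℕ // Multiset.card s = h ∧ (∀ a ∈ s, a ∈ A) ∧ s.sum = n},
      ((u : Multiset ℕ).map (fun a => (⟨min a n, by omega⟩ : Fin (n+1)))).map Fin.val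
        = (u : Multiset ℕ) := by
    intro u
    rw [Multiset.map_map]
    rw [Multiset.map_congr rfl (g := id) ?_, Multiset.map_id]
    intro a ha
    have : a ≤ n := u.2.2.2 ▸ Multiset.le_sum_of_mem ha
    simp [Function.comp, min_eq_left this]
  have : (s : Multiset ℕ) = (t : Multiset ℕ) := by
    have h2 := congrArg (Multiset.map Fin.val) hmaps
    rwa [key s, key t] at h2
  exact Subtype.ext this

lemma repCount_congr (A B : Set ℕ) (h n : ℕ) (hAB : ∀ m ≤ n, (m ∈ A ↔ m ∈ B)) :
    repCount A h n = repCount B h n := by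
  unfold repCount
  apply Nat.card_congr
  apply Equiv.subtypeEquivRight
  intro s
  constructor <;> rintro ⟨h1, h2, h3⟩
  · exact ⟨h1, fun a ha => (hAB a (h3 ▸ Multiset.le_sum_of_mem ha)).mp (h2 a ha), h3⟩
  · exact ⟨h1, fun a ha => (hAB a (h3 ▸ Multiset.le_sum_of_mem ha)).mpr (h2 a ha), h3⟩

lemma keydiv (L u v x y : ℕ) (hx : x < L) (hy : y < L)
    (e : 2*L*u + x = 2*L*v + y) : u = v ∧ x = y := by
  have hL : 0 < L := by omega
  have h2L : 0 < 2*L := by omega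
  have hu : (2*L*u + x) / (2*L) = u := by
    rw [Nat.mul_add_div h2L, Nat.div_eq_of_lt (show x < 2*L by omega)]
    omega
  have hv : (2*L*v + y) / (2*L) = v := by
    rw [Nat.mul_add_div h2L, Nat.div_eq_of_lt (show y < 2*L by omega)]
    omega
  have huv : u = v := by rw [← hu, ← hv, e]
  subst huv
  exact ⟨rfl, Nat.add_left_cancel e⟩

lemma rep_lower (h m L : ℕ) (hh : 2 ≤ h) (hL : 1 ≤ L) (A : Set ℕ) (hA : ∀ x, m < x → x ∈ A) :
    L ^ (h-1) ≤ repCount A h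
      ((h-1)*(m+1) + 2*L*(∑ j : Fin (h-1), (j:ℕ)) + ((m+1) + 3*(h-1)*L)) := by
  classical
  obtain ⟨d, rfl⟩ : ∃ d, h = d + 2 := ⟨h - 2, by omega⟩
  have hd1 : d + 2 - 1 = d + 1 := by omega
  rw [hd1]
  set M := m + 1 with hM
  set T : ℕ := ∑ j : Fin (d+1), (j:ℕ) with hT
  set D := M + 3*(d+1)*L with hD
  set n := (d+1)*M + 2*L*T + (M + 3*(d+1)*L) with hn
  -- sum of i bound
  have hsub : ∀ i : Fin (d+1) → Fin L, (∑ j, ((i j : ℕ))) ≤ (d+1)*L := by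
    intro i
    calc (∑ j, ((i j : ℕ))) ≤ ∑ _j : Fin (d+1), L :=
          Finset.sum_le_sum (fun j _ => (i j).isLt.le)
      _ = (d+1)*L := by simp [Finset.sum_const, Finset.card_univ, mul_comm]
  have hsubD : ∀ i : Fin (d+1) → Fin L, (∑ j, ((i j : ℕ))) ≤ D := by
    intro i
    have h1 := hsub i
    have h2 : (d+1)*L ≤ 3*((d+1)*L) := Nat.le_mul_of_pos_left _ (by omega)
    have h3 : 3*((d+1)*L) = 3*(d+1)*L := by ring
    omega
  set F : (Fin (d+1) → Fin L) → Multiset ℕ := fun i =>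
    (D - ∑ j, (i j : ℕ)) ::ₘ (Finset.univ.val.map (fun j : Fin (d+1) => M + 2*L*(j:ℕ) + (i j : ℕ)))
      with hF
  have hcard : ∀ i, Multiset.card (F i) = d + 2 := by
    intro i
    simp [hF]
  have hmemF : ∀ i, ∀ a ∈ F i, m < a := by
    intro i a ha
    rw [hF, Multiset.mem_cons] at ha
    rcases ha with h1 | h1
    · have h2 := hsub i
      have h3 : 3*(d+1)*L = (d+1)*L + (d+1)*L + (d+1)*L := by ring
      omega
    · obtain ⟨j, _, rfl⟩ := Multiset.mem_map.1 h1
      omega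
  have hsumF : ∀ i, (F i).sum = n := by
    intro i
    rw [hF]
    simp only [Multiset.sum_cons]
    have hmap : (Finset.univ.val.map (fun j : Fin (d+1) => M + 2*L*(j:ℕ) + (i j : ℕ))).sum
        = ∑ j : Fin (d+1), (M + 2*L*(j:ℕ) + (i j : ℕ)) := rfl
    rw [hmap]
    have : ∑ j : Fin (d+1), (M + 2*L*(j:ℕ) + (i j : ℕ))
        = (d+1)*M + 2*L*T + ∑ j, ((i j : ℕ)) := by
      rw [Finset.sum_add_distrib, Finset.sum_add_distrib, ← Finset.mul_sum]
      simp [Finset.sum_const, Finset.card_univ]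
      exact Or.inl hT.symm
    rw [this]
    have h1 := hsubD i
    omega
  have hinj : Function.Injective F := by
    intro i i' he
    funext j
    have hx : M + 2*L*(j:ℕ) + (i j : ℕ) ∈ F i := by
      rw [hF, Multiset.mem_cons]
      right
      exact Multiset.mem_map.2 ⟨j, by simp, rfl⟩
    rw [he, hF, Multiset.mem_cons] at hx
    rcases hx with h1 | h1
    · -- impossible: the element is too small to be the head
      exfalso
      have hjb : (j:ℕ) ≤ d := by omega
      have hib : (i j : ℕ) < L := (i j).isLt
      have h2 : 2*L*(j:ℕ) ≤ 2*L*d := Nat.mul_le_mul_left _ hjb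
      have h3 := hsubD i'
      have h4 := hsub i'
      -- D - Σ i' ≥ M + 2*(d+1)*L > M + 2*L*d + (L-1) ≥ our element
      have h5 : 3*(d+1)*L = 2*L*d + 2*L + (d+1)*L := by ring
      omega
    · obtain ⟨j', _, hj'⟩ := Multiset.mem_map.1 h1
      have h2 : 2*L*(j':ℕ) + (i' j' : ℕ) = 2*L*(j:ℕ) + (i j : ℕ) := by omega
      obtain ⟨hjj, hii⟩ := keydiv L (j':ℕ) (j:ℕ) (i' j' : ℕ) (i j : ℕ) (i' j').isLt (i j).isLt h2
      have : j' = j := Fin.ext hjj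
      subst this
      exact (Fin.ext hii).symm
  haveI := repFinite A (d+2) n
  have hcount := Nat.card_le_card_of_injective
    (fun i : Fin (d+1) → Fin L =>
      (⟨F i, hcard i, fun a ha => hA a (hmemF i a ha), hsumF i⟩ :
        {s : Multiset ℕ // Multiset.card s = d+2 ∧ (∀ a ∈ s, a ∈ A) ∧ s.sum = n}))
    (fun i i' hii => hinj (congrArg Subtype.val hii))
  calc L ^ (d+1) = Nat.card (Fin (d+1) → Fin L) := by
        simp [Nat.card_eq_fintype_card]
    _ ≤ _ := hcount

lemma exists_good (h : ℕ) (hh : 2 ≤ h) (f : ℕ → ℕ)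
    (hdiv : Filter.Tendsto f Filter.atTop Filter.atTop)
    (hsmall : Filter.Tendsto (fun n : ℕ => (f n : ℝ) / (n : ℝ) ^ (h - 1))
      Filter.atTop (nhds 0))
    (k N m : ℕ) (A : Set ℕ) (hA : ∀ x, m < x → x ∈ A) :
    ∃ n, N ≤ n ∧ 1 ≤ f n ∧ k * f n < repCount A h n := by
  classical
  set M := m + 1 with hM
  set C := (h+1)*M + 2*h*h + 3*h with hC
  have hCpos : 0 < C := by
    have : 0 < (h+1)*M := Nat.mul_pos (by omega) (by omega)
    omega
  set ε : ℝ := (((k:ℝ)+1) * (C:ℝ)^(h-1))⁻¹ with hε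
  have hεpos : 0 < ε := by positivity
  have hev : ∀ᶠ n in Filter.atTop, (f n : ℝ) / (n:ℝ)^(h-1) < ε ∧ 1 ≤ f n :=
    (hsmall.eventually (gt_mem_nhds hεpos)).and (hdiv.eventually_ge_atTop 1)
  obtain ⟨N₀, hN₀⟩ := Filter.eventually_atTop.1 hev
  set L := max (max N 1) N₀ with hL
  have hL1 : 1 ≤ L := le_trans (le_max_right N 1) (le_max_left _ _)
  set T : ℕ := ∑ j : Fin (h-1), (j:ℕ) with hT
  set n := (h-1)*M + 2*L*T + (M + 3*(h-1)*L) with hn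
  have hrep : L ^ (h-1) ≤ repCount A h n := rep_lower h m L hh hL1 A hA
  have hnL : L ≤ n := by
    have h1 : L ≤ 3*(h-1)*L := by
      have : 1*(1*L) ≤ 3*((h-1)*L) :=
        Nat.mul_le_mul (by omega) (Nat.mul_le_mul (by omega) le_rfl)
      have e : 3*((h-1)*L) = 3*(h-1)*L := by ring
      omega
    omega
  have hnN : N ≤ n := le_trans (le_trans (le_max_left N 1) (le_max_left _ _)) hnL
  have hnN₀ : N₀ ≤ n := le_trans (le_max_right _ _) hnL
  obtain ⟨hfsmall, hf1⟩ := hN₀ n hnN₀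
  have hnC : n ≤ C * L := by
    have hTb : T ≤ (h-1)*h := by
      rw [hT]
      calc (∑ j : Fin (h-1), (j:ℕ)) ≤ ∑ _j : Fin (h-1), h :=
            Finset.sum_le_sum (fun j _ => le_of_lt (lt_of_lt_of_le j.isLt (by omega)))
        _ = (h-1)*h := by simp [Finset.sum_const, Finset.card_univ, mul_comm]
    have h1 : 2*L*T ≤ 2*L*((h-1)*h) := Nat.mul_le_mul_left _ hTb
    have h2 : (h-1)*M + M ≤ (h+1)*M := by
      have e : (h+1)*M = (h-1)*M + M + M := by
        have : h + 1 = (h-1) + 1 + 1 := by omega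
        rw [this]; ring
      omega
    have h3 : (h+1)*M ≤ (h+1)*M*L := Nat.le_mul_of_pos_right _ (by omega)
    have h4 : 2*L*((h-1)*h) ≤ 2*h*h*L := by
      calc 2*L*((h-1)*h) ≤ 2*L*(h*h) := Nat.mul_le_mul_left _ (Nat.mul_le_mul_right _ (by omega))
        _ = 2*h*h*L := by ring
    have h5 : 3*(h-1)*L ≤ 3*h*L := Nat.mul_le_mul_right _ (by omega)
    have e2 : C*L = (h+1)*M*L + 2*h*h*L + 3*h*L := by rw [hC]; ring
    omega
  -- now the real-number estimate
  have hkey : (k : ℝ) * (f n) < (L:ℝ) ^ (h-1) := by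
    have hn1 : (1:ℝ) ≤ (n:ℝ) := by exact_mod_cast le_trans hL1 hnL
    have hnpow : (0:ℝ) < (n:ℝ)^(h-1) := by positivity
    have hf_lt : (f n : ℝ) < ε * (n:ℝ)^(h-1) := by
      rw [div_lt_iff₀ hnpow] at hfsmall
      linarith
    have hf1' : (1:ℝ) ≤ (f n : ℝ) := by exact_mod_cast hf1
    have hstep : (k:ℝ) * (f n) < ((k:ℝ)+1) * (f n) := by nlinarith
    have hmono : ((k:ℝ)+1) * (f n) < ((k:ℝ)+1) * (ε * (n:ℝ)^(h-1)) := by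
      apply mul_lt_mul_of_pos_left hf_lt (by positivity)
    have hCL : (n:ℝ)^(h-1) ≤ ((C:ℝ)*(L:ℝ))^(h-1) := by
      apply pow_le_pow_left₀ (by positivity)
      exact_mod_cast hnC
    have hfinal : ((k:ℝ)+1) * (ε * (n:ℝ)^(h-1)) ≤ (L:ℝ)^(h-1) := by
      have hCpos' : (0:ℝ) < (C:ℝ)^(h-1) := by positivity
      have : ((k:ℝ)+1) * (ε * (n:ℝ)^(h-1)) ≤ ((k:ℝ)+1) * (ε * ((C:ℝ)^(h-1) * (L:ℝ)^(h-1))) := by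
        apply mul_le_mul_of_nonneg_left _ (by positivity)
        apply mul_le_mul_of_nonneg_left _ (le_of_lt hεpos)
        rw [← mul_pow]
        exact hCL
      refine le_trans this (le_of_eq ?_)
      rw [hε]
      field_simp
    linarith
  have : k * f n < L ^ (h-1) := by exact_mod_cast hkey
  exact ⟨n, hnN, hf1, lt_of_lt_of_le this hrep⟩

lemma Wopen (c n h : ℕ) : IsOpen {A : ℕ → Bool | c < repCount {m | A m = true} h n} := by
  rw [isOpen_iff_forall_mem_open]
  intro A hA
  refine ⟨⋂ m ∈ Finset.range (n+1), (fun B : ℕ → Bool => B m) ⁻¹' {A m}, ?_, ?_, ?_⟩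
  · intro B hB
    simp only [Set.mem_iInter, Set.mem_preimage, Set.mem_singleton_iff, Finset.mem_range] at hB
    have heq : repCount {m | B m = true} h n = repCount {m | A m = true} h n := by
      apply repCount_congr
      intro m hm
      simp only [Set.mem_setOf_eq, hB m (by omega)]
    simpa [Set.mem_setOf_eq, heq] using hA
  · exact isOpen_biInter_finset fun m _ =>
      (isOpen_discrete {A m}).preimage (continuous_apply m)
  · simp

theorem stmt9 (h : ℕ) (hh : 2 ≤ h) (f : ℕ → ℕ)
    (hdiv : Filter.Tendsto f Filter.atTop Filter.atTop)
    (hsmall : Filter.Tendsto (fun n : ℕ => (f n : ℝ) / (n : ℝ) ^ (h - 1))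
      Filter.atTop (nhds 0)) :
    {A : ℕ → Bool |
      Filter.limsup
        (fun n => (repCount {m | A m = true} h n : ℝ≥0∞) / (f n : ℝ≥0∞)) Filter.atTop = ⊤}
      ∈ residual (ℕ → Bool) := by
  classical
  set V : ℕ × ℕ → Set (ℕ → Bool) := fun p =>
    {A | ∃ n, p.2 ≤ n ∧ 1 ≤ f n ∧ p.1 * f n < repCount {m | A m = true} h n} with hV
  have hopen : ∀ p, IsOpen (V p) := by
    intro p
    have : V p = ⋃ n ∈ {n | p.2 ≤ n ∧ 1 ≤ f n},
        {A : ℕ → Bool | p.1 * f n < repCount {m | A m = true} h n} := by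
      ext A
      simp only [hV, Set.mem_setOf_eq, Set.mem_iUnion, exists_prop]
      tauto
    rw [this]
    exact isOpen_biUnion fun n _ => Wopen _ n h
  have hdense : ∀ p, Dense (V p) := by
    intro p
    rw [dense_iff_inter_open]
    rintro U hU ⟨A, hA⟩
    obtain ⟨I, u, hu, hsubU⟩ := isOpen_pi_iff.1 hU A hA
    set m := I.sup id with hm
    set B : ℕ → Bool := fun x => if x ∈ I then A x else true with hB
    have hBU : B ∈ U := by
      apply hsubU
      intro a ha
      have ha' : a ∈ I := Finset.mem_coe.1 ha
      have hBa : B a = A a := by simp only [hB]; rw [if_pos ha']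
      rw [hBa]
      exact (hu a ha).2
    have hBsup : ∀ x, m < x → x ∈ {y | B y = true} := by
      intro x hx
      have hxI : x ∉ I := fun hxI => absurd (Finset.le_sup (f := id) hxI) (not_le.2 hx)
      show B x = true
      simp only [hB]
      rw [if_neg hxI]
    obtain ⟨n, hn1, hn2, hn3⟩ := exists_good h hh f hdiv hsmall p.1 p.2 m _ hBsup
    exact ⟨B, ⟨hBU, ⟨n, hn1, hn2, hn3⟩⟩⟩
  have hsub : (⋂ p, V p) ⊆ {A : ℕ → Bool |
      Filter.limsup
        (fun n => (repCount {m | A m = true} h n : ℝ≥0∞) / (f n : ℝ≥0∞)) Filter.atTop = ⊤} := by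
    intro A hA
    simp only [Set.mem_iInter] at hA
    have hk : ∀ k : ℕ, (k : ℝ≥0∞) ≤ Filter.limsup
        (fun n => (repCount {m | A m = true} h n : ℝ≥0∞) / (f n : ℝ≥0∞)) Filter.atTop := by
      intro k
      apply Filter.le_limsup_of_frequently_le (hu_le := Filter.isBoundedUnder_of ⟨⊤, fun _ => le_top⟩)
      rw [Filter.frequently_atTop]
      intro N
      obtain ⟨n, hn1, hn2, hn3⟩ := hA (k, N)
      refine ⟨n, hn1, ?_⟩
      rw [ENNReal.le_div_iff_mul_le (Or.inl ?_) (Or.inl ?_)]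
      · have : (k * f n : ℕ) ≤ repCount {m | A m = true} h n := le_of_lt hn3
        exact_mod_cast this
      · exact_mod_cast Nat.one_le_iff_ne_zero.1 hn2
      · exact ENNReal.natCast_ne_top _
    by_contra hne
    obtain ⟨k, hklt⟩ := ENNReal.exists_nat_gt hne
    exact absurd (hk k) (not_le.2 hklt)
  exact Filter.mem_of_superset
    (countable_iInter_mem.2 fun p => residual_of_dense_open (hopen p) (hdense p)) hsub
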